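/- Let W be a q-ary DMC (q = 2^r), let 0 ≤ k ≤ r−1, and let ε > 0. If Z_i(W) < ε for every i with k+1 ≤ i ≤ r, then the restricted channel W^{[r−k]} satisfies Z_i(W^{[r−k]}) < 2^k·ε for every i with 1 ≤ i ≤ r−k. -/

import Mathlib

open Finset

instance (r : ℕ) : NeZero (2 ^ r) := ⟨pow_ne_zero r two_ne_zero⟩

/-- The Bhattacharyya parameter `Z(W; x, x') = ∑_y √(W x y · W x' y)` of a pair of inputs. -/
noncomputable def bhat {q : ℕ} {Y : Type*} [Fintype Y] (W : ZMod q → Y → ℝ) (x x' : ZMod q) : ℝ :=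
  ∑ y, Real.sqrt (W x y * W x' y)

/-- `Z_v(W) = (1/q) ∑_x Z(W; x, x+v)`. -/
noncomputable def Zv {q : ℕ} [NeZero q] {Y : Type*} [Fintype Y] (W : ZMod q → Y → ℝ) (v : ZMod q) : ℝ :=
  (1 / (q : ℝ)) * ∑ x, bhat W x (x + v)

/-- `W` is a discrete memoryless channel: nonnegative entries and rows summing to one. -/
def IsDMC {q : ℕ} {Y : Type*} [Fintype Y] (W : ZMod q → Y → ℝ) : Prop :=
  (∀ x y, 0 ≤ W x y) ∧ ∀ x, ∑ y, W x y = 1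

/-- The ordered weight `wt(v) = r - ν₂(v̄)` of `v : ZMod (2^r)`. -/
def owt (r : ℕ) {q : ℕ} (v : ZMod q) : ℕ := r - padicValNat 2 v.val

/-- The `i`-th average Bhattacharyya distance `Z_i(W) = 2^{-(i-1)} ∑_{v ∈ X_i} Z_v(W)`. -/
noncomputable def Zi (r : ℕ) {Y : Type*} [Fintype Y] (W : ZMod (2 ^ r) → Y → ℝ) (i : ℕ) : ℝ :=
  (1 / 2 ^ (i - 1) : ℝ) *
    ∑ v ∈ univ.filter (fun v : ZMod (2 ^ r) => v ≠ 0 ∧ owt r v = i), Zv W v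

/-- The symmetric capacity `I(W)` (with `0 log 0 = 0`). -/
noncomputable def symCap {q : ℕ} [NeZero q] {Y : Type*} [Fintype Y] (W : ZMod q → Y → ℝ) : ℝ :=
  ∑ x, ∑ y, (1 / (q : ℝ)) * W x y *
    Real.logb 2 (W x y / ∑ x', (1 / (q : ℝ)) * W x' y)

/-- `Z_max^{(j)}(W) = max_{v ∈ X_j} Z_v(W)` (as a supremum over the finite nonempty class `X_j`). -/
noncomputable def Zmax (r : ℕ) {Y : Type*} [Fintype Y] (W : ZMod (2 ^ r) → Y → ℝ) (j : ℕ) : ℝ :=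
  ⨆ v : {v : ZMod (2 ^ r) // v ≠ 0 ∧ owt r v = j}, Zv W v.1

/-- The Arıkan minus transform `W⁻ u₁ (y₁,y₂) = (1/q) ∑_{u₂} W (u₁+u₂) y₁ · W u₂ y₂`. -/
noncomputable def Wminus {q : ℕ} [NeZero q] {Y : Type*} [Fintype Y] (W : ZMod q → Y → ℝ) :
    ZMod q → Y × Y → ℝ :=
  fun u₁ p => (1 / (q : ℝ)) * ∑ u₂, W (u₁ + u₂) p.1 * W u₂ p.2

/-- The Arıkan plus transform `W⁺ u₂ (y₁,y₂,u₁) = (1/q) W (u₁+u₂) y₁ · W u₂ y₂`. -/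
noncomputable def Wplus {q : ℕ} [NeZero q] {Y : Type*} [Fintype Y] (W : ZMod q → Y → ℝ) :
    ZMod q → Y × Y × ZMod q → ℝ :=
  fun u₂ p => (1 / (q : ℝ)) * W (p.2.2 + u₂) p.1 * W u₂ p.2.1

/-- The restricted channel `W^{[r-k]}` for the `r-k` least significant bits. -/
noncomputable def Wres (r k : ℕ) {Y : Type*} [Fintype Y] (W : ZMod (2 ^ r) → Y → ℝ) :
    ZMod (2 ^ (r - k)) → Y → ℝ :=
  fun u y => (1 / 2 ^ k : ℝ) *
    ∑ x ∈ univ.filter (fun x : ZMod (2 ^ r) => x.val % 2 ^ (r - k) = u.val), W x y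

/- ### Auxiliary lemmas -/

lemma aux_sqrt_add_le {x y : ℝ} (hx : 0 ≤ x) (hy : 0 ≤ y) :
    Real.sqrt (x + y) ≤ Real.sqrt x + Real.sqrt y := by
  have h : x + y ≤ (Real.sqrt x + Real.sqrt y) ^ 2 := by
    nlinarith [Real.sq_sqrt hx, Real.sq_sqrt hy, Real.sqrt_nonneg x, Real.sqrt_nonneg y]
  calc Real.sqrt (x + y) ≤ Real.sqrt ((Real.sqrt x + Real.sqrt y) ^ 2) := Real.sqrt_le_sqrt h
    _ = _ := Real.sqrt_sq (by positivity)

lemma aux_sqrt_sum_le {α : Type*} (s : Finset α) (f : α → ℝ) (hf : ∀ i ∈ s, 0 ≤ f i) :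
    Real.sqrt (∑ i ∈ s, f i) ≤ ∑ i ∈ s, Real.sqrt (f i) := by
  induction s using Finset.cons_induction with
  | empty => simp
  | cons a s ha ih =>
    rw [Finset.sum_cons, Finset.sum_cons]
    calc Real.sqrt (f a + ∑ i ∈ s, f i)
        ≤ Real.sqrt (f a) + Real.sqrt (∑ i ∈ s, f i) :=
          aux_sqrt_add_le (hf a (mem_cons_self _ _))
            (Finset.sum_nonneg fun i hi => hf i (mem_cons.2 (Or.inr hi)))
      _ ≤ _ := by
          have := ih (fun i hi => hf i (mem_cons.2 (Or.inr hi)))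
          linarith

lemma aux_sqrt_sum_mul_sum_le {α β : Type*} (s : Finset α) (t : Finset β) (f : α → ℝ)
    (g : β → ℝ) (hf : ∀ i ∈ s, 0 ≤ f i) (hg : ∀ j ∈ t, 0 ≤ g j) :
    Real.sqrt ((∑ i ∈ s, f i) * ∑ j ∈ t, g j) ≤ ∑ i ∈ s, ∑ j ∈ t, Real.sqrt (f i * g j) := by
  rw [Real.sqrt_mul (Finset.sum_nonneg hf)]
  have e : ∑ i ∈ s, ∑ j ∈ t, Real.sqrt (f i * g j)
      = (∑ i ∈ s, Real.sqrt (f i)) * ∑ j ∈ t, Real.sqrt (g j) := by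
    rw [Finset.sum_mul_sum]
    exact sum_congr rfl fun i hi => sum_congr rfl fun j hj => Real.sqrt_mul (hf i hi) _
  rw [e]
  exact mul_le_mul (aux_sqrt_sum_le s f hf) (aux_sqrt_sum_le t g hg) (Real.sqrt_nonneg _)
    (Finset.sum_nonneg fun i _ => Real.sqrt_nonneg _)

lemma aux_padic_add {t a c : ℕ} (ha : a ≠ 0) (hlt : padicValNat 2 a < t) :
    padicValNat 2 (a + 2 ^ t * c) = padicValNat 2 a := by
  set p := padicValNat 2 a with hp
  have hne : a + 2 ^ t * c ≠ 0 := by positivity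
  have h1 : (2 : ℕ) ^ p ∣ a + 2 ^ t * c :=
    dvd_add pow_padicValNat_dvd (dvd_mul_of_dvd_left (pow_dvd_pow 2 hlt.le) _)
  have h2 : ¬ (2 : ℕ) ^ (p + 1) ∣ a + 2 ^ t * c := by
    intro hd
    have hd2 : (2 : ℕ) ^ (p + 1) ∣ 2 ^ t * c := dvd_mul_of_dvd_left (pow_dvd_pow 2 hlt) _
    have : (2 : ℕ) ^ (p + 1) ∣ a := by
      have := Nat.dvd_sub hd hd2
      rwa [Nat.add_sub_cancel] at this
    exact pow_succ_padicValNat_not_dvd ha this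
  have le1 : p ≤ padicValNat 2 (a + 2 ^ t * c) := (padicValNat_dvd_iff_le hne).mp h1
  have le2 : padicValNat 2 (a + 2 ^ t * c) ≤ p := by
    by_contra hcon
    exact h2 ((padicValNat_dvd_iff_le hne).mpr (by omega))
  omega

lemma aux_padic_lt {a t : ℕ} (ha : a ≠ 0) (h : a < 2 ^ t) : padicValNat 2 a < t := by
  have h1 : (2 : ℕ) ^ padicValNat 2 a ≤ a :=
    Nat.le_of_dvd (Nat.pos_of_ne_zero ha) pow_padicValNat_dvd
  exact (Nat.pow_lt_pow_iff_right (by norm_num)).mp (lt_of_le_of_lt h1 h)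

/-- if `Z_i(W) < ε` for all `k+1 ≤ i ≤ r`, then `Z_i(W^{[r-k]}) < 2^k ε` for all
`1 ≤ i ≤ r-k`. -/
theorem Zi_restricted_channel (r : ℕ) (hr : 1 ≤ r) {Y : Type*} [Fintype Y] [Nonempty Y]
    (W : ZMod (2 ^ r) → Y → ℝ) (hW : IsDMC W) (k : ℕ) (hk : k ≤ r - 1)
    (ε : ℝ) (hε : 0 < ε) (h : ∀ i, k + 1 ≤ i → i ≤ r → Zi r W i < ε) :
    ∀ i, 1 ≤ i → i ≤ r - k → Zi (r - k) (Wres r k W) i < 2 ^ k * ε := by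
  intro i hi1 hi2
  have hkr : k < r := by omega
  have hdvd : (2 : ℕ) ^ (r - k) ∣ 2 ^ r := pow_dvd_pow 2 (Nat.sub_le r k)
  set π : ZMod (2 ^ r) →+* ZMod (2 ^ (r - k)) := ZMod.castHom hdvd _ with hπ
  have hπval : ∀ x : ZMod (2 ^ r), (π x).val = x.val % 2 ^ (r - k) := by
    intro x
    have : π x = ((x.val : ℕ) : ZMod (2 ^ (r - k))) := by
      rw [hπ, ZMod.castHom_apply, ZMod.natCast_val]
    rw [this, ZMod.val_natCast]
  have hπeq : ∀ (x : ZMod (2 ^ r)) (u : ZMod (2 ^ (r - k))),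
      x.val % 2 ^ (r - k) = u.val ↔ π x = u := by
    intro x u
    rw [← hπval]
    exact ⟨fun hh => ZMod.val_injective _ hh, fun hh => by rw [hh]⟩
  -- fibers
  have hfilter : ∀ u : ZMod (2 ^ (r - k)),
      (univ.filter (fun x : ZMod (2 ^ r) => x.val % 2 ^ (r - k) = u.val))
        = univ.filter (fun x : ZMod (2 ^ r) => π x = u) := by
    intro u
    apply filter_congr
    intro x _
    simp [hπeq x u]
  -- step 1: bhat of the restricted channel
  have key : ∀ u u' : ZMod (2 ^ (r - k)), bhat (Wres r k W) u u' ≤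
      (1 / 2 ^ k : ℝ) * ∑ x ∈ univ.filter (fun x : ZMod (2 ^ r) => π x = u),
        ∑ x' ∈ univ.filter (fun x' : ZMod (2 ^ r) => π x' = u'), bhat W x x' := by
    intro u u'
    have h1 : ∀ y, Real.sqrt (Wres r k W u y * Wres r k W u' y) ≤
        (1 / 2 ^ k : ℝ) * ∑ x ∈ univ.filter (fun x : ZMod (2 ^ r) => π x = u),
          ∑ x' ∈ univ.filter (fun x' : ZMod (2 ^ r) => π x' = u'),
            Real.sqrt (W x y * W x' y) := by
      intro y
      have e : Wres r k W u y * Wres r k W u' y = (1 / 2 ^ k : ℝ) ^ 2 *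
          ((∑ x ∈ univ.filter (fun x : ZMod (2 ^ r) => π x = u), W x y) *
            ∑ x' ∈ univ.filter (fun x' : ZMod (2 ^ r) => π x' = u'), W x' y) := by
        unfold Wres
        rw [hfilter u, hfilter u']
        ring
      rw [e, Real.sqrt_mul (by positivity), Real.sqrt_sq (by positivity)]
      have := aux_sqrt_sum_mul_sum_le
        (univ.filter (fun x : ZMod (2 ^ r) => π x = u))
        (univ.filter (fun x' : ZMod (2 ^ r) => π x' = u'))
        (fun x => W x y) (fun x' => W x' y) (fun x _ => hW.1 x y) (fun x' _ => hW.1 x' y)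
      have hc : (0 : ℝ) ≤ 1 / 2 ^ k := by positivity
      exact mul_le_mul_of_nonneg_left this hc
    unfold bhat
    calc ∑ y, Real.sqrt (Wres r k W u y * Wres r k W u' y)
        ≤ ∑ y, ((1 / 2 ^ k : ℝ) * ∑ x ∈ univ.filter (fun x : ZMod (2 ^ r) => π x = u),
          ∑ x' ∈ univ.filter (fun x' : ZMod (2 ^ r) => π x' = u'),
            Real.sqrt (W x y * W x' y)) := Finset.sum_le_sum fun y _ => h1 y
      _ = (1 / 2 ^ k : ℝ) * ∑ x ∈ univ.filter (fun x : ZMod (2 ^ r) => π x = u),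
          ∑ x' ∈ univ.filter (fun x' : ZMod (2 ^ r) => π x' = u'),
            ∑ y, Real.sqrt (W x y * W x' y) := by
          rw [← Finset.mul_sum]
          congr 1
          rw [Finset.sum_comm]
          exact sum_congr rfl fun x _ => Finset.sum_comm
  -- step 2: Zv of the restricted channel
  have hZv : ∀ v : ZMod (2 ^ (r - k)), Zv (Wres r k W) v ≤
      ∑ w ∈ univ.filter (fun w : ZMod (2 ^ r) => π w = v), Zv W w := by
    intro v
    have hc1 : ((2 ^ (r - k) : ℕ) : ℝ) = (2 : ℝ) ^ (r - k) := by push_cast; ring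
    have step1 : Zv (Wres r k W) v ≤ (1 / 2 ^ (r - k) : ℝ) * ((1 / 2 ^ k : ℝ) *
        ∑ u : ZMod (2 ^ (r - k)), ∑ x ∈ univ.filter (fun x : ZMod (2 ^ r) => π x = u),
          ∑ x' ∈ univ.filter (fun x' : ZMod (2 ^ r) => π x' = u + v), bhat W x x') := by
      unfold Zv
      rw [hc1]
      calc (1 / (2 : ℝ) ^ (r - k)) * ∑ u, bhat (Wres r k W) u (u + v)
          ≤ (1 / (2 : ℝ) ^ (r - k)) * ∑ u, ((1 / 2 ^ k : ℝ) *
            ∑ x ∈ univ.filter (fun x : ZMod (2 ^ r) => π x = u),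
              ∑ x' ∈ univ.filter (fun x' : ZMod (2 ^ r) => π x' = u + v), bhat W x x') := by
            apply mul_le_mul_of_nonneg_left _ (by positivity)
            exact Finset.sum_le_sum fun u _ => key u (u + v)
        _ = _ := by rw [← Finset.mul_sum]
    -- reindex the triple sum
    have step2 : ∑ u : ZMod (2 ^ (r - k)), ∑ x ∈ univ.filter (fun x : ZMod (2 ^ r) => π x = u),
          ∑ x' ∈ univ.filter (fun x' : ZMod (2 ^ r) => π x' = u + v), bhat W x x'
        = ∑ w ∈ univ.filter (fun w : ZMod (2 ^ r) => π w = v), ∑ x, bhat W x (x + w) := by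
      have e1 : ∀ u : ZMod (2 ^ (r - k)),
          ∑ x ∈ univ.filter (fun x : ZMod (2 ^ r) => π x = u),
            ∑ x' ∈ univ.filter (fun x' : ZMod (2 ^ r) => π x' = u + v), bhat W x x'
          = ∑ x ∈ univ.filter (fun x : ZMod (2 ^ r) => π x = u),
            ∑ x' ∈ univ.filter (fun x' : ZMod (2 ^ r) => π x' = π x + v), bhat W x x' := by
        intro u
        apply sum_congr rfl
        intro x hx
        have : π x = u := (mem_filter.mp hx).2
        rw [this]
      rw [Finset.sum_congr rfl (fun u _ => e1 u)]
      rw [Finset.sum_fiberwise univ π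
        (fun x => ∑ x' ∈ univ.filter (fun x' : ZMod (2 ^ r) => π x' = π x + v), bhat W x x')]
      have e2 : ∀ x : ZMod (2 ^ r),
          ∑ x' ∈ univ.filter (fun x' : ZMod (2 ^ r) => π x' = π x + v), bhat W x x'
          = ∑ w ∈ univ.filter (fun w : ZMod (2 ^ r) => π w = v), bhat W x (x + w) := by
        intro x
        apply Finset.sum_nbij' (fun x' => x' - x) (fun w => x + w)
        · intro a ha
          simp only [mem_filter, mem_univ, true_and] at ha ⊢
          rw [map_sub, ha]
          ring
        · intro w hw
          simp only [mem_filter, mem_univ, true_and] at hw ⊢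
          rw [map_add, hw]
        · intro a _; ring
        · intro a _; ring
        · intro a _
          congr 1
          ring
      rw [Finset.sum_congr rfl (fun x _ => e2 x), Finset.sum_comm]
    rw [step2] at step1
    refine le_trans step1 (le_of_eq ?_)
    rw [Finset.mul_sum, Finset.mul_sum]
    apply sum_congr rfl
    intro w _
    unfold Zv
    have hc2 : ((2 ^ r : ℕ) : ℝ) = (2 : ℝ) ^ r := by push_cast; ring
    rw [hc2, ← mul_assoc]
    congr 1
    rw [div_mul_div_comm, one_mul, ← pow_add, Nat.sub_add_cancel hkr.le]
  -- step 3: the class correspondence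
  have hclass : ∀ w : ZMod (2 ^ r),
      (π w ≠ 0 ∧ owt (r - k) (π w) = i) ↔ (w ≠ 0 ∧ owt r w = k + i) := by
    intro w
    have hwlt : w.val < 2 ^ r := ZMod.val_lt w
    have hMpos : 0 < 2 ^ (r - k) := Nat.pow_pos (by norm_num)
    have hmod : (π w).val = w.val % 2 ^ (r - k) := hπval w
    have hsplit : w.val = w.val % 2 ^ (r - k) + 2 ^ (r - k) * (w.val / 2 ^ (r - k)) :=
      (Nat.mod_add_div _ _).symm
    constructor
    · rintro ⟨hv0, hvi⟩
      have ha : w.val % 2 ^ (r - k) ≠ 0 := by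
        rw [← hmod]; exact fun hh => hv0 ((ZMod.val_eq_zero _).mp hh)
      have halt : padicValNat 2 (w.val % 2 ^ (r - k)) < r - k :=
        aux_padic_lt ha (Nat.mod_lt _ hMpos)
      have hpa : padicValNat 2 (w.val % 2 ^ (r - k)) = (r - k) - i := by
        unfold owt at hvi
        rw [hmod] at hvi
        omega
      have hpw : padicValNat 2 w.val = (r - k) - i := by
        rw [hsplit, aux_padic_add ha halt, hpa]
      have hw0 : w ≠ 0 := by
        intro hh
        apply ha
        rw [hh] at hmod ⊢
        simp [ZMod.val_zero]
      refine ⟨hw0, ?_⟩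
      unfold owt
      rw [hpw]
      omega
    · rintro ⟨hw0, hwi⟩
      have hwv0 : w.val ≠ 0 := fun hh => hw0 ((ZMod.val_eq_zero _).mp hh)
      have hpwlt : padicValNat 2 w.val < r := aux_padic_lt hwv0 hwlt
      have hpw : padicValNat 2 w.val = r - k - i := by
        unfold owt at hwi
        omega
      have ha : w.val % 2 ^ (r - k) ≠ 0 := by
        intro hh
        have : (2 : ℕ) ^ (r - k) ∣ w.val := Nat.dvd_of_mod_eq_zero hh
        have := (padicValNat_dvd_iff_le hwv0).mp this
        omega
      have halt : padicValNat 2 (w.val % 2 ^ (r - k)) < r - k :=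
        aux_padic_lt ha (Nat.mod_lt _ hMpos)
      have hpa : padicValNat 2 (w.val % 2 ^ (r - k)) = r - k - i := by
        have := aux_padic_add (c := w.val / 2 ^ (r - k)) ha halt
        rw [← hsplit] at this
        omega
      constructor
      · intro hh
        apply ha
        rw [← hmod, hh, ZMod.val_zero]
      · unfold owt
        rw [hmod, hpa]
        omega
  -- step 4: assemble
  have hki : Zi (r - k) (Wres r k W) i ≤ 2 ^ k * Zi r W (k + i) := by
    unfold Zi
    have hle : ∑ v ∈ univ.filter (fun v : ZMod (2 ^ (r - k)) => v ≠ 0 ∧ owt (r - k) v = i),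
          Zv (Wres r k W) v
        ≤ ∑ v ∈ univ.filter (fun v : ZMod (2 ^ (r - k)) => v ≠ 0 ∧ owt (r - k) v = i),
          ∑ w ∈ univ.filter (fun w : ZMod (2 ^ r) => π w = v), Zv W w :=
      Finset.sum_le_sum fun v _ => hZv v
    have hre : ∑ v ∈ univ.filter (fun v : ZMod (2 ^ (r - k)) => v ≠ 0 ∧ owt (r - k) v = i),
          ∑ w ∈ univ.filter (fun w : ZMod (2 ^ r) => π w = v), Zv W w
        = ∑ w ∈ univ.filter (fun w : ZMod (2 ^ r) => w ≠ 0 ∧ owt r w = k + i), Zv W w := by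
      rw [Finset.sum_fiberwise_eq_sum_filter univ
        (univ.filter (fun v : ZMod (2 ^ (r - k)) => v ≠ 0 ∧ owt (r - k) v = i)) π (Zv W)]
      apply sum_congr _ (fun _ _ => rfl)
      apply filter_congr
      intro w _
      simp only [mem_filter, mem_univ, true_and]
      exact hclass w
    calc (1 / 2 ^ (i - 1) : ℝ) *
          ∑ v ∈ univ.filter (fun v : ZMod (2 ^ (r - k)) => v ≠ 0 ∧ owt (r - k) v = i),
            Zv (Wres r k W) v
        ≤ (1 / 2 ^ (i - 1) : ℝ) *
          ∑ w ∈ univ.filter (fun w : ZMod (2 ^ r) => w ≠ 0 ∧ owt r w = k + i), Zv W w := by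
          apply mul_le_mul_of_nonneg_left _ (by positivity)
          rw [← hre]; exact hle
      _ = 2 ^ k * ((1 / 2 ^ (k + i - 1) : ℝ) *
          ∑ w ∈ univ.filter (fun w : ZMod (2 ^ r) => w ≠ 0 ∧ owt r w = k + i), Zv W w) := by
          rw [← mul_assoc]
          congr 1
          have : k + i - 1 = k + (i - 1) := by omega
          rw [this, pow_add]
          field_simp
    
  have hfin : Zi r W (k + i) < ε := h (k + i) (by omega) (by omega)
  calc Zi (r - k) (Wres r k W) i ≤ 2 ^ k * Zi r W (k + i) := hki
    _ < 2 ^ k * ε := by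
        apply mul_lt_mul_of_pos_left hfin (by positivity)
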